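/- Fourier transform of the disk indicator in two dimensions: let L > 0 and let f : ℝ² → ℂ be the indicator function of the closed ball of radius L centered at the origin. Then for every ξ ∈ ℝ² with ξ ≠ 0, the Fourier transform 𝓕f(ξ) = ∫_{ℝ²} f(x)·exp(−2πi⟨x,ξ⟩) dx equals L·J₁(2πL·‖ξ‖)/‖ξ‖. -/

import Mathlib

open Real MeasureTheory

noncomputable def Mfun (s : ℝ) : ℝ := ∫ θ in (0:ℝ)..π, Real.cos (θ - s * Real.sin θ)
noncomputable def Kfun (s : ℝ) : ℝ := ∫ θ in (0:ℝ)..π, Real.cos (s * Real.sin θ)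

lemma Mfun_eq (s : ℝ) :
    Mfun s = s * ∫ θ in (0:ℝ)..π, Real.cos θ * Real.cos (θ - s * Real.sin θ) := by
  have hd : ∀ θ ∈ Set.uIcc (0:ℝ) π, HasDerivAt (fun θ => Real.sin (θ - s * Real.sin θ))
      ((1 - s * Real.cos θ) * Real.cos (θ - s * Real.sin θ)) θ := by
    intro θ _
    have h1 : HasDerivAt (fun θ : ℝ => θ - s * Real.sin θ) (1 - s * Real.cos θ) θ :=
      (hasDerivAt_id θ).sub ((Real.hasDerivAt_sin θ).const_mul s)
    simpa [mul_comm, Function.comp_def] using (Real.hasDerivAt_sin _).comp θ h1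
  have hc1 : Continuous fun θ : ℝ => Real.cos (θ - s * Real.sin θ) := by fun_prop
  have hc2 : Continuous fun θ : ℝ => Real.cos θ * Real.cos (θ - s * Real.sin θ) := by fun_prop
  have hint : IntervalIntegrable
      (fun θ => (1 - s * Real.cos θ) * Real.cos (θ - s * Real.sin θ)) volume 0 π := by
    apply Continuous.intervalIntegrable; fun_prop
  have h0 := intervalIntegral.integral_eq_sub_of_hasDerivAt hd hint
  simp only [Real.sin_pi, mul_zero, sub_zero, Real.sin_zero, mul_zero, sub_zero] at h0
  -- h0 : ∫ (1 - s cos θ) * cos (θ - s sin θ) = sin π - sin 0 = 0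
  have hsplit : ∀ θ : ℝ, (1 - s * Real.cos θ) * Real.cos (θ - s * Real.sin θ)
      = Real.cos (θ - s * Real.sin θ) - s * (Real.cos θ * Real.cos (θ - s * Real.sin θ)) := by
    intro θ; ring
  rw [intervalIntegral.integral_congr (g := fun θ => Real.cos (θ - s * Real.sin θ)
      - s * (Real.cos θ * Real.cos (θ - s * Real.sin θ))) (fun θ _ => hsplit θ),
    intervalIntegral.integral_sub (hc1.intervalIntegrable _ _)
      ((by fun_prop : Continuous fun θ => s * (Real.cos θ * Real.cos (θ - s * Real.sin θ))).intervalIntegrable _ _),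
    intervalIntegral.integral_const_mul] at h0
  unfold Mfun
  linarith

lemma hasDerivAt_Mfun (s : ℝ) :
    HasDerivAt Mfun (∫ θ in (0:ℝ)..π, Real.sin θ * Real.sin (θ - s * Real.sin θ)) s := by
  have := (intervalIntegral.hasDerivAt_integral_of_dominated_loc_of_deriv_le
    (F := fun s θ => Real.cos (θ - s * Real.sin θ))
    (F' := fun s θ => Real.sin θ * Real.sin (θ - s * Real.sin θ))
    (x₀ := s) (a := 0) (b := π) (bound := fun _ => 1) (μ := volume)
    (s := Set.univ) Filter.univ_mem ?_ ?_ ?_ ?_ ?_ ?_).2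
  · exact this
  · filter_upwards with x
    exact (Continuous.aestronglyMeasurable (by fun_prop)).restrict
  · exact Continuous.intervalIntegrable (by fun_prop) _ _
  · exact (Continuous.aestronglyMeasurable (by fun_prop)).restrict
  · filter_upwards with θ _ x _
    calc ‖Real.sin θ * Real.sin (θ - x * Real.sin θ)‖
        ≤ 1 * 1 := by
          rw [norm_mul]
          exact mul_le_mul (Real.abs_sin_le_one θ) (Real.abs_sin_le_one _)
            (norm_nonneg _) zero_le_one
      _ = 1 := one_mul 1
  · exact intervalIntegrable_const
  · filter_upwards with θ _ x _
    have h1 : HasDerivAt (fun x : ℝ => θ - x * Real.sin θ) (-Real.sin θ) x := by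
      simpa [Pi.sub_def] using (hasDerivAt_const x θ).sub ((hasDerivAt_id x).mul_const (Real.sin θ))
    have := (Real.hasDerivAt_cos (θ - x * Real.sin θ)).comp x h1
    simpa [mul_comm, Function.comp_def] using this

lemma hasDerivAt_Phi (a : ℝ) (ha : a ≠ 0) (r : ℝ) :
    HasDerivAt (fun r => 2 / a * r * Mfun (a * r)) (2 * r * Kfun (a * r)) r := by
  have hM : HasDerivAt (fun r => Mfun (a * r))
      (a * ∫ θ in (0:ℝ)..π, Real.sin θ * Real.sin (θ - a * r * Real.sin θ)) r := by
    have := (hasDerivAt_Mfun (a * r)).comp r ((hasDerivAt_id r).const_mul a)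
    simpa [mul_comm, Function.comp_def] using this
  have hprod := ((hasDerivAt_id r).const_mul (2 / a)).mul hM
  have key : 2 / a * 1 * Mfun (a * r)
      + 2 / a * r * (a * ∫ θ in (0:ℝ)..π, Real.sin θ * Real.sin (θ - a * r * Real.sin θ))
      = 2 * r * Kfun (a * r) := by
    rw [Mfun_eq (a * r)]
    have hcomb : (∫ θ in (0:ℝ)..π, Real.cos θ * Real.cos (θ - a * r * Real.sin θ))
        + (∫ θ in (0:ℝ)..π, Real.sin θ * Real.sin (θ - a * r * Real.sin θ))
        = Kfun (a * r) := by
      rw [← intervalIntegral.integral_add (Continuous.intervalIntegrable (by fun_prop) _ _)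
        (Continuous.intervalIntegrable (by fun_prop) _ _)]
      unfold Kfun
      apply intervalIntegral.integral_congr
      intro θ _
      have := Real.cos_sub θ (θ - a * r * Real.sin θ)
      simpa using this.symm
    rw [← hcomb]
    field_simp
  have h2 : HasDerivAt (fun y => 2 / a * y * Mfun (a * y))
      (2 / a * 1 * Mfun (a * r)
        + 2 / a * r * (a * ∫ θ in (0:ℝ)..π, Real.sin θ * Real.sin (θ - a * r * Real.sin θ))) r := by
    simpa only [id_eq, Pi.mul_def] using hprod
  rw [key] at h2
  exact h2

lemma continuous_Kfun : Continuous Kfun := by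
  unfold Kfun
  exact intervalIntegral.continuous_parametric_intervalIntegral_of_continuous'
    (f := fun s θ => Real.cos (s * Real.sin θ)) (μ := volume) (by fun_prop) 0 π

lemma radial_integral (a L : ℝ) (ha : a ≠ 0) :
    ∫ r in (0:ℝ)..L, 2 * r * Kfun (a * r) = 2 / a * L * Mfun (a * L) := by
  have hd : ∀ r ∈ Set.uIcc (0:ℝ) L, HasDerivAt (fun r => 2 / a * r * Mfun (a * r))
      (2 * r * Kfun (a * r)) r := fun r _ => hasDerivAt_Phi a ha r
  have hint : IntervalIntegrable (fun r => 2 * r * Kfun (a * r)) volume 0 L := by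
    apply Continuous.intervalIntegrable
    exact (continuous_const.mul continuous_id).mul (continuous_Kfun.comp (by fun_prop))
  have := intervalIntegral.integral_eq_sub_of_hasDerivAt hd hint
  rw [this]
  simp

lemma coscos_eq_Kfun (s : ℝ) :
    ∫ θ in (0:ℝ)..π, Real.cos (s * Real.cos θ) = Kfun s := by
  have h2 : (π/2 : ℝ) + π/2 = π := by ring
  have hA : ∫ θ in (0:ℝ)..(π/2), Real.cos (s * Real.sin (θ + π/2))
      = ∫ θ in (π/2 : ℝ)..π, Real.cos (s * Real.sin θ) := by
    have := intervalIntegral.integral_comp_add_right (a := (0:ℝ)) (b := π/2)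
      (f := fun θ => Real.cos (s * Real.sin θ)) (π/2)
    rwa [zero_add, h2] at this
  have hB : ∫ θ in (0:ℝ)..(π/2), Real.cos (s * Real.cos (θ + π/2))
      = ∫ θ in (π/2 : ℝ)..π, Real.cos (s * Real.cos θ) := by
    have := intervalIntegral.integral_comp_add_right (a := (0:ℝ)) (b := π/2)
      (f := fun θ => Real.cos (s * Real.cos θ)) (π/2)
    rwa [zero_add, h2] at this
  have e1 : ∀ θ : ℝ, Real.cos (s * Real.sin (θ + π/2)) = Real.cos (s * Real.cos θ) := by
    intro θ; rw [Real.sin_add_pi_div_two]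
  have e2 : ∀ θ : ℝ, Real.cos (s * Real.cos (θ + π/2)) = Real.cos (s * Real.sin θ) := by
    intro θ; rw [Real.cos_add_pi_div_two, mul_neg, Real.cos_neg]
  rw [intervalIntegral.integral_congr (fun θ _ => e1 θ)] at hA
  rw [intervalIntegral.integral_congr (fun θ _ => e2 θ)] at hB
  have hi : ∀ u v : ℝ, ∀ g : ℝ → ℝ, Continuous g → IntervalIntegrable g volume u v :=
    fun u v g hg => hg.intervalIntegrable u v
  have splitA : ∫ θ in (0:ℝ)..π, Real.cos (s * Real.cos θ)
      = (∫ θ in (0:ℝ)..(π/2), Real.cos (s * Real.cos θ))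
        + ∫ θ in (π/2:ℝ)..π, Real.cos (s * Real.cos θ) :=
    (intervalIntegral.integral_add_adjacent_intervals
      (hi _ _ _ (by fun_prop)) (hi _ _ _ (by fun_prop))).symm
  have splitB : Kfun s
      = (∫ θ in (0:ℝ)..(π/2), Real.cos (s * Real.sin θ))
        + ∫ θ in (π/2:ℝ)..π, Real.cos (s * Real.sin θ) :=
    (intervalIntegral.integral_add_adjacent_intervals
      (hi _ _ _ (by fun_prop)) (hi _ _ _ (by fun_prop))).symm
  rw [splitA, splitB, ← hA, ← hB]
  ring

lemma sin_coscos_zero (s : ℝ) :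
    ∫ θ in (0:ℝ)..π, Real.sin (s * Real.cos θ) = 0 := by
  have := intervalIntegral.integral_comp_sub_left (a := (0:ℝ)) (b := π)
    (f := fun θ => Real.sin (s * Real.cos θ)) π
  rw [sub_zero, sub_self] at this
  have e : ∀ θ : ℝ, Real.sin (s * Real.cos (π - θ)) = -Real.sin (s * Real.cos θ) := by
    intro θ; rw [Real.cos_pi_sub, mul_neg, Real.sin_neg]
  rw [intervalIntegral.integral_congr (fun θ _ => e θ), intervalIntegral.integral_neg] at this
  linarith

lemma neg_part (g : ℝ → ℝ) (hg : ∀ x, g (-x) = g x) (hc : Continuous g) :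
    ∫ θ in (-π)..(0:ℝ), g θ = ∫ θ in (0:ℝ)..π, g θ := by
  have := intervalIntegral.integral_comp_neg (a := (0:ℝ)) (b := π) (f := g)
  rw [neg_zero] at this
  rw [← this]
  exact intervalIntegral.integral_congr fun θ _ => hg θ

lemma angular_integral (t : ℝ) :
    (∫ θ in Set.Ioo (-π) π, Complex.exp ((-(t * Real.cos θ) : ℝ) * Complex.I))
      = 2 * (Kfun t : ℂ) := by
  rw [← MeasureTheory.integral_Ioc_eq_integral_Ioo,
    ← intervalIntegral.integral_of_le (by linarith [Real.pi_pos] : (-π:ℝ) ≤ π)]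
  have e : ∀ θ : ℝ, Complex.exp ((-(t * Real.cos θ) : ℝ) * Complex.I)
      = (Real.cos (t * Real.cos θ) : ℂ) - (Real.sin (t * Real.cos θ) : ℂ) * Complex.I := by
    intro θ
    rw [Complex.exp_mul_I, Complex.ofReal_neg, Complex.cos_neg, Complex.sin_neg,
      ← Complex.ofReal_cos, ← Complex.ofReal_sin]
    ring
  rw [intervalIntegral.integral_congr (fun θ _ => e θ)]
  have hi1 : IntervalIntegrable (fun θ : ℝ => (Real.cos (t * Real.cos θ) : ℂ)) volume (-π) π :=
    Continuous.intervalIntegrable (by fun_prop) _ _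
  have hi2 : IntervalIntegrable (fun θ : ℝ => (Real.sin (t * Real.cos θ) : ℂ) * Complex.I)
      volume (-π) π := Continuous.intervalIntegrable (by fun_prop) _ _
  rw [intervalIntegral.integral_sub hi1 hi2, intervalIntegral.integral_mul_const,
    intervalIntegral.integral_ofReal, intervalIntegral.integral_ofReal]
  have hcos : ∫ θ in (-π)..π, Real.cos (t * Real.cos θ) = 2 * Kfun t := by
    rw [← intervalIntegral.integral_add_adjacent_intervals
      (Continuous.intervalIntegrable (by fun_prop) (-π) 0)
      (Continuous.intervalIntegrable (by fun_prop) 0 π),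
      neg_part _ (fun x => by rw [Real.cos_neg]) (by fun_prop), coscos_eq_Kfun]
    ring
  have hsin : ∫ θ in (-π)..π, Real.sin (t * Real.cos θ) = 0 := by
    rw [← intervalIntegral.integral_add_adjacent_intervals
      (Continuous.intervalIntegrable (by fun_prop) (-π) 0)
      (Continuous.intervalIntegrable (by fun_prop) 0 π),
      neg_part _ (fun x => by rw [Real.cos_neg]) (by fun_prop), sin_coscos_zero]
    simp [sin_coscos_zero]
  rw [hcos, hsin]
  simp

/-- The Bessel function of the first kind of order one,
`J₁(x) = (1/π) ∫₀^π cos (θ − x sin θ) dθ`. -/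
noncomputable def J1 (x : ℝ) : ℝ := (1 / π) * ∫ θ in (0:ℝ)..π, Real.cos (θ - x * Real.sin θ)

/-- Fourier transform of the disk indicator in two dimensions: if `f` is the indicator of
the closed ball of radius `L > 0` centered at the origin of `ℝ²`, then for every `ξ ≠ 0`,
`𝓕f(ξ) = ∫_{ℝ²} f(x)·exp(−2πi⟨x,ξ⟩) dx = L·J₁(2πL·‖ξ‖)/‖ξ‖`. -/
theorem fourier_disk_indicator (L : ℝ) (hL : 0 < L)
    (f : EuclideanSpace ℝ (Fin 2) → ℂ)
    (hf : f = Set.indicator (Metric.closedBall 0 L) (fun _ => (1 : ℂ))) :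
    ∀ ξ : EuclideanSpace ℝ (Fin 2), ξ ≠ 0 →
      VectorFourier.fourierIntegral Real.fourierChar volume (innerₗ (EuclideanSpace ℝ (Fin 2))) f ξ = ((L * J1 (2 * π * L * ‖ξ‖) / ‖ξ‖ : ℝ) : ℂ) := by
  intro ξ hξ
  have hπ := Real.pi_pos
  have hc : (0:ℝ) < ‖ξ‖ := norm_pos_iff.mpr hξ
  -- orthonormal basis whose first vector is ξ/‖ξ‖
  have hcard : Module.finrank ℝ (EuclideanSpace ℝ (Fin 2)) = Fintype.card (Fin 2) := by
    simp [finrank_euclideanSpace]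
  have horth : Orthonormal ℝ (Set.restrict ({0} : Set (Fin 2))
      (fun _ => ‖ξ‖⁻¹ • ξ : Fin 2 → EuclideanSpace ℝ (Fin 2))) := by
    constructor
    · intro i
      show ‖‖ξ‖⁻¹ • ξ‖ = 1
      rw [norm_smul, norm_inv, norm_norm, inv_mul_cancel₀ hc.ne']
    · intro i j hij
      exact absurd (Subsingleton.elim i j) hij
  obtain ⟨b, hb⟩ := horth.exists_orthonormalBasis_extension_of_card_eq hcard
  have hb0 : b 0 = ‖ξ‖⁻¹ • ξ := hb 0 rfl
  have hinner : ∀ v : EuclideanSpace ℝ (Fin 2), (inner ℝ v ξ : ℝ) = ‖ξ‖ * b.repr v 0 := by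
    intro v
    have hxi : ξ = ‖ξ‖ • b 0 := by
      rw [hb0, smul_smul, mul_inv_cancel₀ hc.ne', one_smul]
    have h2 : (inner ℝ v ξ : ℝ) = inner ℝ v (‖ξ‖ • b 0) := by rw [← hxi]
    rw [h2, real_inner_smul_right, real_inner_comm, b.repr_apply_apply v 0]
  refine (Real.fourier_eq' f ξ).trans ?_
  have h1 : ∀ v, Complex.exp (((-2 * π * (inner ℝ v ξ : ℝ) : ℝ) : ℂ) * Complex.I) • f v
      = Set.indicator (Metric.closedBall (0:EuclideanSpace ℝ (Fin 2)) L)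
          (fun w => Complex.exp (((-2 * π * (‖ξ‖ * b.repr w 0) : ℝ) : ℂ) * Complex.I)) v := by
    intro v
    rw [hf, hinner]
    by_cases h : v ∈ Metric.closedBall (0:EuclideanSpace ℝ (Fin 2)) L
    · simp [h]
    · simp [h]
  simp_rw [h1]
  rw [MeasureTheory.integral_indicator measurableSet_closedBall]
  -- rotation change of variables
  have ecoe : (⇑(b.measurableEquiv.symm) : EuclideanSpace ℝ (Fin 2) → EuclideanSpace ℝ (Fin 2))
      = ⇑(b.repr.symm) := rfl
  have hpre : (⇑(b.measurableEquiv.symm)) ⁻¹' (Metric.closedBall (0:EuclideanSpace ℝ (Fin 2)) L)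
      = Metric.closedBall 0 L := by
    ext y
    simp only [Set.mem_preimage, Metric.mem_closedBall, dist_zero_right, ecoe,
      b.repr.symm.norm_map]
  have hrot := (b.measurePreserving_measurableEquiv.symm).setIntegral_preimage_emb
    (b.measurableEquiv.symm.measurableEmbedding)
    (fun w => Complex.exp (((-2 * π * (‖ξ‖ * b.repr w 0) : ℝ) : ℂ) * Complex.I))
    (Metric.closedBall 0 L)
  rw [hpre] at hrot
  rw [← hrot]
  have hsimp : ∀ y : EuclideanSpace ℝ (Fin 2),
      b.repr (b.measurableEquiv.symm y) = y := fun y => b.repr.apply_symm_apply y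
  simp_rw [hsimp]
  -- move to ℝ × ℝ
  set Q : (ℝ × ℝ) ≃ᵐ EuclideanSpace ℝ (Fin 2) :=
    (MeasurableEquiv.finTwoArrow.symm).trans (MeasurableEquiv.toLp 2 (Fin 2 → ℝ)) with hQdef
  have hQmp : MeasurePreserving Q volume volume :=
    ((EuclideanSpace.volume_preserving_symm_measurableEquiv_toLp (Fin 2)).symm).comp
      ((volume_preserving_finTwoArrow ℝ).symm)
  have hQ0 : ∀ p : ℝ × ℝ, (Q p) 0 = p.1 := fun p => rfl
  have hQ1 : ∀ p : ℝ × ℝ, (Q p) 1 = p.2 := fun p => rfl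
  have hQpre : (⇑Q) ⁻¹' (Metric.closedBall (0 : EuclideanSpace ℝ (Fin 2)) L)
      = {p : ℝ × ℝ | p.1^2 + p.2^2 ≤ L^2} := by
    ext p
    simp only [Set.mem_preimage, Metric.mem_closedBall, dist_zero_right, Set.mem_setOf_eq]
    rw [EuclideanSpace.norm_eq]
    rw [Fin.sum_univ_two, hQ0, hQ1, Real.norm_eq_abs, Real.norm_eq_abs, sq_abs, sq_abs]
    rw [show L = Real.sqrt (L^2) by rw [Real.sqrt_sq hL.le]]
    rw [Real.sqrt_le_sqrt_iff (by positivity)]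
    rw [Real.sqrt_sq hL.le]
  have hQint := hQmp.setIntegral_preimage_emb Q.measurableEmbedding
    (fun y => Complex.exp (((-2 * π * (‖ξ‖ * y 0) : ℝ) : ℂ) * Complex.I))
    (Metric.closedBall 0 L)
  rw [← hQint, hQpre]
  simp_rw [hQ0]
  -- polar coordinates
  have hD : MeasurableSet {p : ℝ × ℝ | p.1^2 + p.2^2 ≤ L^2} := by
    apply measurableSet_le <;> fun_prop
  rw [← MeasureTheory.integral_indicator hD, ← integral_comp_polarCoord_symm]
  -- rewrite the integrand on the polar target
  have htgt : polarCoord.target = Set.Ioi (0:ℝ) ×ˢ Set.Ioo (-π) π := rfl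
  have hsymm : ∀ q : ℝ × ℝ, polarCoord.symm q = (q.1 * Real.cos q.2, q.1 * Real.sin q.2) :=
    fun q => rfl
  have hcongr : ∀ q ∈ polarCoord.target,
      q.1 • Set.indicator {p : ℝ × ℝ | p.1^2 + p.2^2 ≤ L^2}
        (fun p => Complex.exp (((-2 * π * (‖ξ‖ * p.1) : ℝ) : ℂ) * Complex.I)) (polarCoord.symm q)
      = Set.indicator (Set.Ioc (0:ℝ) L ×ˢ Set.Ioo (-π) π)
          (fun q : ℝ × ℝ => (q.1 : ℂ) *
            Complex.exp (((-2 * π * (‖ξ‖ * (q.1 * Real.cos q.2)) : ℝ) : ℂ) * Complex.I)) q := by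
    rintro ⟨r, θ⟩ hq
    rw [htgt] at hq
    obtain ⟨hr, hθ⟩ := hq
    rw [Set.mem_Ioi] at hr
    have hmem : polarCoord.symm (r, θ) ∈ {p : ℝ × ℝ | p.1^2 + p.2^2 ≤ L^2} ↔ r ≤ L := by
      rw [hsymm]
      simp only [Set.mem_setOf_eq]
      have hid : (r * Real.cos θ)^2 + (r * Real.sin θ)^2 = r^2 := by
        have h2 := Real.sin_sq_add_cos_sq θ
        calc (r * Real.cos θ)^2 + (r * Real.sin θ)^2
            = r^2 * (Real.sin θ^2 + Real.cos θ^2) := by ring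
          _ = r^2 := by rw [h2, mul_one]
      rw [hid]
      constructor
      · intro h; nlinarith
      · intro h; nlinarith
    by_cases h : r ≤ L
    · rw [Set.indicator_of_mem (hmem.mpr h),
        Set.indicator_of_mem (by exact ⟨⟨hr, h⟩, hθ⟩), hsymm]
      rw [Complex.real_smul]
    · rw [Set.indicator_of_notMem (fun hm => h (hmem.mp hm)),
        Set.indicator_of_notMem (by rintro ⟨⟨_, h2⟩, _⟩; exact h h2), smul_zero]
  rw [MeasureTheory.setIntegral_congr_fun polarCoord.open_target.measurableSet hcongr]
  rw [MeasureTheory.setIntegral_indicator (by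
    exact (measurableSet_Ioc).prod measurableSet_Ioo)]
  have hinter : polarCoord.target ∩ (Set.Ioc (0:ℝ) L ×ˢ Set.Ioo (-π) π)
      = Set.Ioc (0:ℝ) L ×ˢ Set.Ioo (-π) π := by
    rw [htgt]
    apply Set.inter_eq_self_of_subset_right
    exact Set.prod_mono Set.Ioc_subset_Ioi_self le_rfl
  rw [hinter]
  -- Fubini
  have hgc : Continuous (fun q : ℝ × ℝ => (q.1 : ℂ) *
      Complex.exp (((-2 * π * (‖ξ‖ * (q.1 * Real.cos q.2)) : ℝ) : ℂ) * Complex.I)) := by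
    fun_prop
  have hint : IntegrableOn (fun q : ℝ × ℝ => (q.1 : ℂ) *
      Complex.exp (((-2 * π * (‖ξ‖ * (q.1 * Real.cos q.2)) : ℝ) : ℂ) * Complex.I))
      (Set.Ioc (0:ℝ) L ×ˢ Set.Ioo (-π) π) volume :=
    ((hgc.continuousOn).integrableOn_compact (isCompact_Icc.prod isCompact_Icc)).mono_set
      (Set.prod_mono Set.Ioc_subset_Icc_self Set.Ioo_subset_Icc_self)
  rw [MeasureTheory.Measure.volume_eq_prod] at hint ⊢
  rw [MeasureTheory.setIntegral_prod _ hint]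
  -- angular integral
  have hin : ∀ r : ℝ, (∫ θ in Set.Ioo (-π) π, ((r:ℂ) *
      Complex.exp (((-2*π*(‖ξ‖*(r*Real.cos θ)) : ℝ) : ℂ) * Complex.I)))
      = ((r * (2 * Kfun (2*π*‖ξ‖*r)) : ℝ) : ℂ) := by
    intro r
    rw [MeasureTheory.integral_const_mul]
    have he : ∀ θ : ℝ, ((-2*π*(‖ξ‖*(r*Real.cos θ)) : ℝ) : ℂ)
        = ((-(2*π*‖ξ‖*r*Real.cos θ) : ℝ) : ℂ) := by
      intro θ; rw [Complex.ofReal_inj]; ring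
    simp_rw [he]
    rw [angular_integral (2*π*‖ξ‖*r)]
    push_cast
    ring
  rw [MeasureTheory.setIntegral_congr_fun measurableSet_Ioc (fun r _ => hin r)]
  rw [show (∫ r in Set.Ioc (0:ℝ) L, ((r * (2 * Kfun (2*π*‖ξ‖*r)) : ℝ) : ℂ))
      = ((∫ r in Set.Ioc (0:ℝ) L, r * (2 * Kfun (2*π*‖ξ‖*r)) : ℝ) : ℂ) from
    _root_.integral_ofReal (𝕜 := ℂ)]
  rw [show (∫ r in Set.Ioc (0:ℝ) L, r * (2 * Kfun (2*π*‖ξ‖*r)))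
      = ∫ r in (0:ℝ)..L, r * (2 * Kfun (2*π*‖ξ‖*r)) from
    (intervalIntegral.integral_of_le hL.le).symm]
  have hre : (∫ r in (0:ℝ)..L, r * (2 * Kfun (2*π*‖ξ‖*r)))
      = ∫ r in (0:ℝ)..L, 2 * r * Kfun ((2*π*‖ξ‖)*r) := by
    apply intervalIntegral.integral_congr
    intro r _
    ring
  rw [hre, radial_integral (2*π*‖ξ‖) L (by positivity)]
  congr 1
  have hJ : J1 (2*π*L*‖ξ‖) = (1/π) * Mfun (2*π*L*‖ξ‖) := rfl
  rw [hJ, show (2*π*‖ξ‖)*L = 2*π*L*‖ξ‖ by ring]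
  field_simp
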